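/- In the vector lattice c₀₀ of finitely supported real sequences, the set A = { (1/n)e₁ + (1/k)∑_{i=2}^n e_i : n,k ∈ ℕ } does not contain 0 in its relative uniform adherence, but 0 belongs to the second relative uniform adherence of A (hence the uniform adherence of A is not uniformly closed). -/
import Mathlib

noncomputable def c00S (n : ℕ) : ℕ →₀ ℝ := ∑ j ∈ Finset.Icc 2 n, Finsupp.single j (1:ℝ)

lemma fs_abs_apply (f : ℕ →₀ ℝ) (i : ℕ) : |f| i = |f i| := by
  rw [abs, abs, Finsupp.sup_apply, Finsupp.neg_apply]

lemma c00S_apply (n i : ℕ) : c00S n i = if i ∈ Finset.Icc 2 n then 1 else 0 := by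
  rw [c00S, Finsupp.finset_sum_apply]
  simp [Finsupp.single_apply]

lemma c00S_nonneg (n : ℕ) : 0 ≤ c00S n := by
  rw [Finsupp.le_def]
  intro i
  rw [c00S_apply]
  simp only [Finsupp.coe_zero, Pi.zero_apply]
  split <;> norm_num

lemma smul_le_smul_reg (g : ℕ →₀ ℝ) (hg : 0 ≤ g) {c ε : ℝ} (h0 : 0 ≤ c) (h : c ≤ ε) :
    |c • g| ≤ ε • g := by
  rw [Finsupp.le_def] at hg ⊢
  intro i
  have hgi : 0 ≤ g i := by simpa using hg i
  rw [fs_abs_apply, Finsupp.smul_apply, Finsupp.smul_apply, smul_eq_mul, smul_eq_mul,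
    abs_of_nonneg (mul_nonneg h0 hgi)]
  exact mul_le_mul_of_nonneg_right h hgi

lemma one_div_succ_le {ε : ℝ} (hε : 0 < ε) {k : ℕ} (hk : ⌈1/ε⌉₊ ≤ k) :
    1 / ((k:ℝ) + 1) ≤ ε := by
  have h1 : 1/ε ≤ (k:ℝ) + 1 := by
    have := Nat.le_ceil (1/ε)
    have h2 : (⌈1/ε⌉₊ : ℝ) ≤ (k:ℝ) := by exact_mod_cast hk
    linarith
  rw [div_le_iff₀ (by positivity)]
  have := mul_le_mul_of_nonneg_left h1 hε.le
  rwa [mul_one_div, div_self hε.ne'] at this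


open Filter Set

section Defs

variable (X : Type*) [Lattice X] [AddCommGroup X] [Module ℝ X]

/-- Archimedean property for a vector lattice. -/
def VLArchimedean : Prop := ∀ x y : X, (∀ n : ℕ, n • x ≤ y) → x ≤ 0

variable {X}

/-- `Y` is a sublattice: a linear subspace closed under `⊔`. -/
def IsVLSublattice (Y : Set X) : Prop :=
  (0 : X) ∈ Y ∧ (∀ a ∈ Y, ∀ b ∈ Y, a + b ∈ Y) ∧
    (∀ (c : ℝ), ∀ a ∈ Y, c • a ∈ Y) ∧ (∀ a ∈ Y, ∀ b ∈ Y, a ⊔ b ∈ Y)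

/-- `Y` is majorizing in `X`. -/
def Majorizing (Y : Set X) : Prop := ∀ x : X, 0 ≤ x → ∃ y ∈ Y, x ≤ y

/-- Relative uniform convergence of a sequence with regulator `e`. -/
def RUTendsto (x : ℕ → X) (l e : X) : Prop :=
  0 ≤ e ∧ ∀ ε : ℝ, 0 < ε → ∃ N, ∀ n ≥ N, |x n - l| ≤ ε • e

/-- Relative uniform Cauchy sequence with regulator `e`. -/
def RUCauchy (x : ℕ → X) (e : X) : Prop :=
  0 ≤ e ∧ ∀ ε : ℝ, 0 < ε → ∃ N, ∀ n ≥ N, ∀ m ≥ N, |x n - x m| ≤ ε • e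

/-- Relative uniform convergence of a net with regulator `e`. -/
def RUTendstoNet {ι : Type*} [Preorder ι] (x : ι → X) (l e : X) : Prop :=
  0 ≤ e ∧ ∀ ε : ℝ, 0 < ε → ∃ α₀, ∀ α ≥ α₀, |x α - l| ≤ ε • e

/-- Relative uniform Cauchy net with regulator `e`. -/
def RUCauchyNet {ι : Type*} [Preorder ι] (x : ι → X) (e : X) : Prop :=
  0 ≤ e ∧ ∀ ε : ℝ, 0 < ε → ∃ α₀, ∀ α ≥ α₀, ∀ β ≥ α₀, |x α - x β| ≤ ε • e

/-- Uniform adherence of a set: all relative uniform limits of sequences from `A`. -/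
def uAdh (A : Set X) : Set X :=
  {l | ∃ x : ℕ → X, (∀ n, x n ∈ A) ∧ ∃ e, RUTendsto x l e}

/-- `A` is uniformly closed. -/
def RUClosed (A : Set X) : Prop := uAdh A ⊆ A

/-- Uniform closure: the least uniformly closed superset of `A`. -/
def uClosure (A : Set X) : Set X := ⋂₀ {B : Set X | A ⊆ B ∧ RUClosed B}

variable (X)

/-- Relative uniform completeness (for sequences). -/
def RUComplete : Prop :=
  ∀ x : ℕ → X, (∃ e, RUCauchy x e) → ∃ l e, RUTendsto x l e

variable {X}

/-- Relative uniform completeness of a sublattice `Y` (regulators taken in `Y`). -/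
def RUCompleteIn (Y : Set X) : Prop :=
  ∀ x : ℕ → X, (∀ n, x n ∈ Y) → (∃ e ∈ Y, RUCauchy x e) →
    ∃ l ∈ Y, ∃ e ∈ Y, RUTendsto x l e

/-- An (order) ideal of a vector lattice: a solid linear subspace. -/
def IsVLIdeal (I : Set X) : Prop :=
  (0 : X) ∈ I ∧ (∀ a ∈ I, ∀ b ∈ I, a + b ∈ I) ∧ (∀ (c : ℝ), ∀ a ∈ I, c • a ∈ I) ∧
    ∀ x : X, ∀ y ∈ I, |x| ≤ |y| → x ∈ I

/-- The ideal generated by a set. -/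
def idealGen (Y : Set X) : Set X := ⋂₀ {I : Set X | Y ⊆ I ∧ IsVLIdeal I}

/-- `B` is a projection band: an ideal along which the space decomposes. -/
def IsProjectionBand (B : Set X) : Prop :=
  IsVLIdeal B ∧ ∀ x : X, ∃ b ∈ B, ∃ d : X, (∀ y ∈ B, |d| ⊓ |y| = 0) ∧ x = b + d

end Defs
/-- The set `A = { (1/n)e₁ + (1/k)∑_{i=2}^n e_i : n,k ≥ 1 }` in `c₀₀ = ℕ →₀ ℝ`. -/
noncomputable def c00A : Set (ℕ →₀ ℝ) :=
  {f | ∃ n k : ℕ, 1 ≤ n ∧ 1 ≤ k ∧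
    f = (1 / (n : ℝ)) • Finsupp.single 1 (1 : ℝ) +
        (1 / (k : ℝ)) • ∑ i ∈ Finset.Icc 2 n, Finsupp.single i (1 : ℝ)}

theorem zero_not_in_adherence_but_in_second_adherence :
    (0 : ℕ →₀ ℝ) ∉ uAdh c00A ∧ (0 : ℕ →₀ ℝ) ∈ uAdh (uAdh c00A) ∧
      ¬ RUClosed (uAdh c00A) := by
  have hAdh1 : ∀ n : ℕ, (1 / ((n:ℝ) + 1)) • Finsupp.single 1 (1:ℝ) ∈ uAdh c00A := by
    intro n
    refine ⟨fun k => (1 / (((n+1:ℕ)):ℝ)) • Finsupp.single 1 (1:ℝ)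
        + (1 / (((k+1:ℕ)):ℝ)) • c00S (n+1), fun k => ⟨n+1, k+1, by omega, by omega, by rw [c00S]⟩,
      c00S (n+1), c00S_nonneg _, ?_⟩
    intro ε hε
    refine ⟨⌈1/ε⌉₊, fun k hk => ?_⟩
    have hsub : (1 / (((n+1:ℕ)):ℝ)) • Finsupp.single 1 (1:ℝ)
        + (1 / (((k+1:ℕ)):ℝ)) • c00S (n+1) - (1 / ((n:ℝ) + 1)) • Finsupp.single 1 (1:ℝ)
        = (1 / (((k+1:ℕ)):ℝ)) • c00S (n+1) := by
      push_cast
      abel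
    rw [hsub]
    refine smul_le_smul_reg _ (c00S_nonneg _) (by positivity) ?_
    push_cast
    exact one_div_succ_le hε hk
  refine ⟨?h1, ?h2, fun h => ?h1 (h ?h2)⟩
  · rintro ⟨x, hxA, e, he0, hconv⟩
    set i := (e.support.sup id) + 2 with hi
    have hi2 : 2 ≤ i := by omega
    have hei : e i = 0 := by
      by_contra h
      have hmem : i ∈ e.support := Finsupp.mem_support_iff.mpr h
      have := Finset.le_sup (f := id) hmem
      simp only [id] at this
      omega
    have he1 : 0 ≤ e 1 := by simpa using Finsupp.le_def.mp he0 1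
    set ε : ℝ := 1 / ((i:ℝ) * (e 1 + 1)) with hεdef
    have hipos : (0:ℝ) < (i:ℝ) := by exact_mod_cast (by omega : 0 < i)
    have hε : 0 < ε := by positivity
    obtain ⟨N, hN⟩ := hconv ε hε
    obtain ⟨n, k, hn, hk, hx⟩ := hxA N
    have hle := hN N le_rfl
    have h1 := Finsupp.le_def.mp hle 1
    rw [fs_abs_apply, Finsupp.smul_apply, smul_eq_mul, Finsupp.sub_apply] at h1
    have hx1 : x N 1 = 1 / (n:ℝ) := by
      rw [hx]
      have : (∑ j ∈ Finset.Icc 2 n, Finsupp.single j (1:ℝ)) = c00S n := rfl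
      rw [this]
      simp [Finsupp.single_apply, c00S_apply, Finset.mem_Icc]
    have hnpos : (0:ℝ) < (n:ℝ) := by exact_mod_cast hn
    have h1' : 1 / (n:ℝ) ≤ ε * e 1 := by
      simp only [Finsupp.coe_zero, Pi.zero_apply, sub_zero] at h1
      rwa [hx1, abs_of_nonneg (by positivity : (0:ℝ) ≤ 1/(n:ℝ))] at h1
    have hεe1 : ε * e 1 < 1 / (i:ℝ) := by
      rw [hεdef, div_mul_eq_mul_div, one_mul, div_lt_div_iff₀ (by positivity) hipos]
      nlinarith
    have hiltn : i < n := by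
      have hlt : 1 / (n:ℝ) < 1 / (i:ℝ) := lt_of_le_of_lt h1' hεe1
      by_contra h
      push_neg at h
      have hcast : (n:ℝ) ≤ (i:ℝ) := by exact_mod_cast h
      have := one_div_le_one_div_of_le hnpos hcast
      linarith
    have h2 := Finsupp.le_def.mp hle i
    rw [fs_abs_apply, Finsupp.smul_apply, smul_eq_mul, Finsupp.sub_apply, hei, mul_zero] at h2
    have hxi : x N i = 1 / (k:ℝ) := by
      rw [hx]
      have : (∑ j ∈ Finset.Icc 2 n, Finsupp.single j (1:ℝ)) = c00S n := rfl
      rw [this]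
      have h1i : (1:ℕ) ≠ i := by omega
      simp [Finsupp.single_apply, c00S_apply, Finset.mem_Icc, h1i, hi2, le_of_lt hiltn]
    have hkpos : (0:ℝ) < (k:ℝ) := by exact_mod_cast hk
    rw [hxi] at h2
    simp only [Finsupp.coe_zero, Pi.zero_apply, sub_zero] at h2
    rw [abs_of_nonneg (by positivity : (0:ℝ) ≤ 1/(k:ℝ))] at h2
    have : (0:ℝ) < 1 / (k:ℝ) := by positivity
    linarith
  · refine ⟨fun n => (1 / ((n:ℝ) + 1)) • Finsupp.single 1 (1:ℝ), hAdh1,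
      Finsupp.single 1 (1:ℝ), Finsupp.single_nonneg.mpr zero_le_one, ?_⟩
    intro ε hε
    refine ⟨⌈1/ε⌉₊, fun n hn => ?_⟩
    rw [sub_zero]
    refine smul_le_smul_reg _ (Finsupp.single_nonneg.mpr zero_le_one) (by positivity) ?_
    exact one_div_succ_le hε hn
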